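/- Let G be a countable group and let λ be an isolated left order on G such that the only λ-convex subgroups of G are the trivial subgroup and G itself. Then there is an injective group homomorphism φ : G → (ℚ,+) which is either order-preserving (g <_λ g' ⟺ φ(g) < φ(g')) or order-reversing (g <_λ g' ⟺ φ(g') < φ(g)). In particular G is isomorphic to a subgroup of (ℚ,+) and λ is either the order induced by such an embedding into ℚ ⊂ ℝ or its reciprocal. -/

import Mathlib

/-- A left-invariant strict total order on a group `G`. -/
structure LeftOrder (G : Type*) [Group G] where
  lt : G → G → Prop
  irrefl : ∀ g, ¬ lt g g
  trans : ∀ f g h, lt f g → lt g h → lt f h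
  total : ∀ f g, f ≠ g → lt f g ∨ lt g f
  mul_left : ∀ f g h, lt f g → lt (h * f) (h * g)

/-- The topology on the space `LO(G)` of left orders of `G`, i.e. the topology induced
from the product (pointwise convergence) topology on `{±1}^{G∖{e}}` via the sign map
`λ(g) = 1 ⟺ g ∈ P_λ`.  A subbasis is given by the sets of left orders for which a fixed
element `g` is positive, resp. not positive. -/
instance LeftOrder.instTopologicalSpace (G : Type*) [Group G] :
    TopologicalSpace (LeftOrder G) :=
  TopologicalSpace.generateFrom
    {U : Set (LeftOrder G) | ∃ g : G,
      U = {mu : LeftOrder G | mu.lt 1 g} ∨ U = {mu : LeftOrder G | ¬ mu.lt 1 g}}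

/-- A left order is isolated if it is an isolated point of `LO(G)`. -/
def LeftOrder.IsIsolated {G : Type*} [Group G] (lam : LeftOrder G) : Prop :=
  IsOpen ({lam} : Set (LeftOrder G))

/-- A subgroup `H` is `λ`-convex if `h₁ <_λ g <_λ h₂` with `h₁, h₂ ∈ H` implies `g ∈ H`. -/
def LeftOrder.IsConvex {G : Type*} [Group G] (lam : LeftOrder G) (H : Subgroup G) : Prop :=
  ∀ h₁ h₂ g : G, h₁ ∈ H → h₂ ∈ H → lam.lt h₁ g → lam.lt g h₂ → g ∈ H

namespace LeftOrderAux

open Classical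

variable {G : Type*} [Group G]

/-! ### Basic order lemmas -/

section Basic

variable (lam : LeftOrder G)

/-- The non-strict order associated to a left order. -/
def Le (x y : G) : Prop := lam.lt x y ∨ x = y

variable {lam}

lemma asymm {x y : G} (h : lam.lt x y) : ¬ lam.lt y x := fun h' =>
  lam.irrefl x (lam.trans x y x h h')

lemma mul_left_iff (h : G) {x y : G} : lam.lt (h * x) (h * y) ↔ lam.lt x y := by
  constructor
  · intro hlt
    have := lam.mul_left _ _ h⁻¹ hlt
    simpa using this
  · exact lam.mul_left x y h

lemma lt_one_iff_inv {x : G} : lam.lt x 1 ↔ lam.lt 1 x⁻¹ := by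
  constructor
  · intro h; have := lam.mul_left _ _ x⁻¹ h; simpa using this
  · intro h; have := lam.mul_left _ _ x h; simpa using this

lemma one_lt_iff_inv {x : G} : lam.lt 1 x ↔ lam.lt x⁻¹ 1 := by
  rw [lt_one_iff_inv, inv_inv]

lemma lt_iff_one_lt {x y : G} : lam.lt x y ↔ lam.lt 1 (x⁻¹ * y) := by
  rw [← mul_left_iff (lam := lam) x⁻¹, inv_mul_cancel]

lemma trichotomy (x y : G) : lam.lt x y ∨ x = y ∨ lam.lt y x := by
  by_cases h : x = y
  · exact Or.inr (Or.inl h)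
  · rcases lam.total x y h with h' | h'
    · exact Or.inl h'
    · exact Or.inr (Or.inr h')

lemma le_refl (x : G) : Le lam x x := Or.inr rfl

lemma le_of_lt {x y : G} (h : lam.lt x y) : Le lam x y := Or.inl h

lemma le_total (x y : G) : Le lam x y ∨ Le lam y x := by
  rcases trichotomy x y with h | h | h
  · exact Or.inl (Or.inl h)
  · exact Or.inl (Or.inr h)
  · exact Or.inr (Or.inl h)

lemma lt_of_le_of_lt {x y z : G} (h1 : Le lam x y) (h2 : lam.lt y z) : lam.lt x z := by
  rcases h1 with h1 | rfl
  · exact lam.trans _ _ _ h1 h2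
  · exact h2

lemma lt_of_lt_of_le {x y z : G} (h1 : lam.lt x y) (h2 : Le lam y z) : lam.lt x z := by
  rcases h2 with h2 | rfl
  · exact lam.trans _ _ _ h1 h2
  · exact h1

lemma le_trans' {x y z : G} (h1 : Le lam x y) (h2 : Le lam y z) : Le lam x z := by
  rcases h1 with h1 | rfl
  · exact Or.inl (lt_of_lt_of_le h1 h2)
  · exact h2

lemma le_mul_left (h : G) {x y : G} (hxy : Le lam x y) : Le lam (h * x) (h * y) := by
  rcases hxy with h' | rfl
  · exact Or.inl (lam.mul_left _ _ h h')
  · exact Or.inr rfl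

lemma le_mul_left_iff (h : G) {x y : G} : Le lam (h * x) (h * y) ↔ Le lam x y := by
  constructor
  · intro hle
    have := le_mul_left h⁻¹ hle
    simpa using this
  · exact le_mul_left h

lemma not_lt_iff_le {x y : G} : ¬ lam.lt x y ↔ Le lam y x := by
  constructor
  · intro h
    rcases trichotomy x y with h' | h' | h'
    · exact absurd h' h
    · exact Or.inr h'.symm
    · exact Or.inl h'
  · rintro (h | rfl) h'
    · exact asymm h h'
    · exact lam.irrefl _ h'

lemma le_antisymm' {x y : G} (h1 : Le lam x y) (h2 : Le lam y x) : x = y := by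
  rcases h1 with h1 | rfl
  · rcases h2 with h2 | rfl
    · exact absurd h2 (asymm h1)
    · rfl
  · rfl

end Basic

/-! ### Building left orders from positive cones -/

/-- Build a left order from a positive cone predicate. -/
def mkOrder (p : G → Prop) (h1 : ¬ p 1) (hmul : ∀ x y, p x → p y → p (x * y))
    (htot : ∀ x, x ≠ 1 → p x ∨ p x⁻¹) : LeftOrder G where
  lt x y := p (x⁻¹ * y)
  irrefl g := by simpa using h1
  trans f g h hfg hgh := by
    have := hmul _ _ hfg hgh
    simpa [mul_assoc] using this
  total f g hfg := by
    have : f⁻¹ * g ≠ 1 := by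
      intro h; apply hfg; rw [← mul_one f, ← h]; group
    rcases htot _ this with h | h
    · exact Or.inl h
    · right; simpa using h
  mul_left f g h hfg := by simpa [mul_assoc] using hfg

lemma mkOrder_lt (p : G → Prop) (h1) (hmul) (htot) (x y : G) :
    (mkOrder p h1 hmul htot).lt x y ↔ p (x⁻¹ * y) := Iff.rfl

/-! ### Extracting a finite determining set from isolation -/

lemma generateOpen_elim {α : Type*} {S : Set (Set α)} {U : Set α}
    (h : TopologicalSpace.GenerateOpen S U) :
    ∀ x ∈ U, ∃ T : Set (Set α), T.Finite ∧ T ⊆ S ∧ x ∈ ⋂₀ T ∧ ⋂₀ T ⊆ U := by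
  induction h with
  | basic s hs =>
      intro x hx
      exact ⟨{s}, Set.finite_singleton s, by simpa, by simpa, by simp⟩
  | univ =>
      intro x _
      exact ⟨∅, Set.finite_empty, by simp, by simp, by simp⟩
  | inter s t _ _ ihs iht =>
      intro x hx
      obtain ⟨T1, hT1f, hT1S, hx1, hsub1⟩ := ihs x hx.1
      obtain ⟨T2, hT2f, hT2S, hx2, hsub2⟩ := iht x hx.2
      refine ⟨T1 ∪ T2, hT1f.union hT2f, Set.union_subset hT1S hT2S, ?_, ?_⟩
      · rw [Set.sInter_union]; exact ⟨hx1, hx2⟩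
      · rw [Set.sInter_union]
        exact fun y hy => ⟨hsub1 hy.1, hsub2 hy.2⟩
  | sUnion σ _ ih =>
      intro x hx
      obtain ⟨s, hsσ, hxs⟩ := hx
      obtain ⟨T, hTf, hTS, hxT, hsub⟩ := ih s hsσ x hxs
      exact ⟨T, hTf, hTS, hxT, fun y hy => ⟨s, hsσ, hsub hy⟩⟩

lemma exists_finset_star (lam : LeftOrder G) (hiso : lam.IsIsolated) :
    ∃ F : Finset G, (∀ f ∈ F, lam.lt 1 f) ∧
      ∀ mu : LeftOrder G, (∀ f ∈ F, mu.lt 1 f) → mu = lam := by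
  classical
  have hgen : TopologicalSpace.GenerateOpen
      {U : Set (LeftOrder G) | ∃ g : G,
        U = {mu : LeftOrder G | mu.lt 1 g} ∨ U = {mu : LeftOrder G | ¬ mu.lt 1 g}}
      ({lam} : Set (LeftOrder G)) := hiso
  obtain ⟨T, hTfin, hTS, hlamT, hTsub⟩ := generateOpen_elim hgen lam rfl
  -- for each t ∈ T choose a group element
  let k : Set (LeftOrder G) → G := fun t =>
    if h : ∃ g : G, t = {mu : LeftOrder G | mu.lt 1 g} ∨ t = {mu : LeftOrder G | ¬ mu.lt 1 g}
    then (if lam.lt 1 h.choose then h.choose else h.choose⁻¹) else 1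
  refine ⟨(hTfin.toFinset.image k).filter (fun f => lam.lt 1 f), ?_, ?_⟩
  · intro f hf
    exact (Finset.mem_filter.mp hf).2
  · intro mu hmu
    have hmusub : mu ∈ ⋂₀ T := by
      intro t ht
      have hS := hTS ht
      have hlamt : lam ∈ t := hlamT t ht
      have hkt : k t = if lam.lt 1 hS.choose then hS.choose else hS.choose⁻¹ := by
        exact dif_pos hS
      have hktmem : k t ∈ hTfin.toFinset.image k :=
        Finset.mem_image_of_mem k (hTfin.mem_toFinset.mpr ht)
      rcases hS.choose_spec with hpos | hneg
      · -- t = positivity set of g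
        have hg : lam.lt 1 hS.choose := by rw [hpos] at hlamt; exact hlamt
        have hkt' : k t = hS.choose := by rw [hkt, if_pos hg]
        have : k t ∈ (hTfin.toFinset.image k).filter (fun f => lam.lt 1 f) := by
          rw [Finset.mem_filter]; exact ⟨hktmem, by rw [hkt']; exact hg⟩
        have := hmu _ this
        rw [hkt'] at this
        rw [hpos]; exact this
      · -- t = negativity set of g
        have hg : ¬ lam.lt 1 hS.choose := by rw [hneg] at hlamt; exact hlamt
        by_cases hone : hS.choose = 1
        · rw [hneg, hone]; exact mu.irrefl 1
        · have hglt : lam.lt 1 hS.choose⁻¹ := by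
            rcases lam.total 1 hS.choose (fun h => hone h.symm) with h | h
            · exact absurd h hg
            · exact lt_one_iff_inv.mp h
          have hkt' : k t = hS.choose⁻¹ := by rw [hkt, if_neg hg]
          have : k t ∈ (hTfin.toFinset.image k).filter (fun f => lam.lt 1 f) := by
            rw [Finset.mem_filter]; exact ⟨hktmem, by rw [hkt']; exact hglt⟩
          have hmug := hmu _ this
          rw [hkt'] at hmug
          rw [hneg]
          intro hcon
          have h1 := mu.mul_left _ _ hS.choose⁻¹ hcon
          simp only [mul_one] at h1
          exact mu.irrefl 1 (mu.trans _ _ _ hmug (by simpa using h1))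
    have := hTsub hmusub
    simpa using this


/-! ### Right invariance from isolation and no proper convex subgroups -/

section Core

variable (lam : LeftOrder G)

/-- The left order with basepoint `x`. -/
def basept (x : G) : LeftOrder G where
  lt u v := lam.lt (u * x) (v * x)
  irrefl g := lam.irrefl _
  trans f g h h1 h2 := lam.trans _ _ _ h1 h2
  total f g h := lam.total _ _ (fun hc => h (mul_right_cancel hc))
  mul_left f g h h1 := by
    simp only [mul_assoc]
    exact lam.mul_left _ _ h h1

variable {lam}
variable {F : Finset G} (hF : ∀ f ∈ F, lam.lt 1 f)
  (star : ∀ mu : LeftOrder G, (∀ f ∈ F, mu.lt 1 f) → mu = lam)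
  (hconv : ∀ H : Subgroup G, lam.IsConvex H → H = ⊥ ∨ H = ⊤)

/-- `B` is the set of points moved to the right by every `f ∈ F`. -/
def Bset (lam : LeftOrder G) (F : Finset G) : Set G := {x | ∀ f ∈ F, lam.lt x (f * x)}

include star in
lemma ri_of_mem {x : G} (hx : x ∈ Bset lam F) (u v : G) :
    lam.lt (u * x) (v * x) ↔ lam.lt u v := by
  have hmu : ∀ f ∈ F, (basept lam x).lt 1 f := by
    intro f hf
    show lam.lt (1 * x) (f * x)
    rw [one_mul]
    exact hx f hf
  have heq := star (basept lam x) hmu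
  have := congrFun (congrFun (congrArg LeftOrder.lt heq) u) v
  exact iff_of_eq this

include hF in
lemma one_mem_B : (1 : G) ∈ Bset lam F := by
  intro f hf
  simpa using hF f hf

include star in
lemma mul_mem_B {x y : G} (hx : x ∈ Bset lam F) (hy : y ∈ Bset lam F) :
    x * y ∈ Bset lam F := by
  intro f hf
  have := (ri_of_mem star hy x (f * x)).mpr (hx f hf)
  simpa [mul_assoc] using this

include hF star in
lemma inv_mem_B {x : G} (hx : x ∈ Bset lam F) : x⁻¹ ∈ Bset lam F := by
  intro f hf
  have key : lam.lt (x⁻¹ * x) ((f * x⁻¹) * x) := by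
    have h1 : (f * x⁻¹) * x = f := by group
    rw [inv_mul_cancel, h1]
    exact hF f hf
  exact (ri_of_mem star hx x⁻¹ (f * x⁻¹)).mp key

/-- `z` lies between `a` and `b` (inclusive). -/
def Btw (lam : LeftOrder G) (a z b : G) : Prop :=
  (Le lam a z ∧ Le lam z b) ∨ (Le lam b z ∧ Le lam z a)

lemma btw_mul_left (h : G) {a z b : G} (hb : Btw lam a z b) :
    Btw lam (h * a) (h * z) (h * b) := by
  rcases hb with ⟨h1, h2⟩ | ⟨h1, h2⟩
  · exact Or.inl ⟨le_mul_left h h1, le_mul_left h h2⟩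
  · exact Or.inr ⟨le_mul_left h h1, le_mul_left h h2⟩

lemma btw_split {z w : G} (h : Btw lam 1 z w) (x : G) : Btw lam 1 z x ∨ Btw lam x z w := by
  rcases h with ⟨h1, h2⟩ | ⟨h1, h2⟩
  · rcases le_total (lam := lam) z x with hzx | hxz
    · exact Or.inl (Or.inl ⟨h1, hzx⟩)
    · exact Or.inr (Or.inl ⟨hxz, h2⟩)
  · rcases le_total (lam := lam) z x with hzx | hxz
    · exact Or.inr (Or.inr ⟨h1, hzx⟩)
    · exact Or.inl (Or.inr ⟨hxz, h2⟩)

lemma btw_one_self (x : G) : Btw lam 1 x x := by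
  rcases le_total (lam := lam) 1 x with h | h
  · exact Or.inl ⟨h, le_refl x⟩
  · exact Or.inr ⟨le_refl x, h⟩

/-- The set of `x` such that the whole interval between `1` and `x` is in `B`. -/
def Cset (lam : LeftOrder G) (F : Finset G) : Set G :=
  {x | ∀ z, Btw lam 1 z x → z ∈ Bset lam F}

include hF star in
lemma Csubgroup_mul {x y : G} (hx : x ∈ Cset lam F) (hy : y ∈ Cset lam F) :
    x * y ∈ Cset lam F := by
  intro z hz
  rcases btw_split hz x with h | h
  · exact hx z h
  · have h2 : Btw lam 1 (x⁻¹ * z) y := by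
      have := btw_mul_left x⁻¹ h
      simpa [mul_assoc] using this
    have hxB : x ∈ Bset lam F := hx x (btw_one_self x)
    have hzB : x⁻¹ * z ∈ Bset lam F := hy _ h2
    have := mul_mem_B star hxB hzB
    simpa using this

include hF star in
lemma Csubgroup_inv {x : G} (hx : x ∈ Cset lam F) : x⁻¹ ∈ Cset lam F := by
  intro z hz
  have h2 : Btw lam 1 (x * z) x := by
    have := btw_mul_left x hz
    exact (by simpa using this.symm : Le lam 1 (x * z) ∧ Le lam (x * z) x ∨ Le lam x (x * z) ∧ Le lam (x * z) 1)
  have hxzB : x * z ∈ Bset lam F := hx _ h2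
  have hxB : x ∈ Bset lam F := hx x (btw_one_self x)
  have := mul_mem_B star (inv_mem_B hF star hxB) hxzB
  simpa using this

include hF in
lemma Csubgroup_one : (1 : G) ∈ Cset lam F := by
  intro z hz
  have hz1 : (1 : G) = z := by
    rcases hz with ⟨h1, h2⟩ | ⟨h1, h2⟩
    · exact le_antisymm' h1 h2
    · exact le_antisymm' h1 h2
  rw [← hz1]
  exact one_mem_B hF

/-- The subgroup with carrier `Cset`. -/
def Csub (lam : LeftOrder G) (F : Finset G) (hF : ∀ f ∈ F, lam.lt 1 f)
    (star : ∀ mu : LeftOrder G, (∀ f ∈ F, mu.lt 1 f) → mu = lam) : Subgroup G where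
  carrier := Cset lam F
  mul_mem' := Csubgroup_mul hF star
  one_mem' := Csubgroup_one hF
  inv_mem' := Csubgroup_inv hF star

include hF star in
lemma Csub_convex : lam.IsConvex (Csub lam F hF star) := by
  intro h₁ h₂ g hh₁ hh₂ hlt₁ hlt₂
  have hh₁' : h₁ ∈ Cset lam F := hh₁
  have hh₂' : h₂ ∈ Cset lam F := hh₂
  intro z hz
  rcases trichotomy (lam := lam) 1 g with hg | hg | hg
  · rcases hz with ⟨h1, h2⟩ | ⟨h1, h2⟩
    · exact hh₂' z (Or.inl ⟨h1, le_trans' h2 (le_of_lt hlt₂)⟩)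
    · have hlt : lam.lt 1 z := lt_of_lt_of_le hg h1
      rcases h2 with h2 | rfl
      · exact absurd hlt (asymm h2)
      · exact one_mem_B hF
  · have hz1 : Btw lam 1 z 1 := hg ▸ hz
    have : (1 : G) = z := by
      rcases hz1 with ⟨h1, h2⟩ | ⟨h1, h2⟩
      · exact le_antisymm' h1 h2
      · exact le_antisymm' h1 h2
    rw [← this]
    exact one_mem_B hF
  · rcases hz with ⟨h1, h2⟩ | ⟨h1, h2⟩
    · have hlt : lam.lt z 1 := lt_of_le_of_lt h2 hg
      rcases h1 with h1 | h1
      · exact absurd hlt (asymm h1)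
      · rw [← h1]; exact one_mem_B hF
    · exact hh₁' z (Or.inr ⟨le_trans' (le_of_lt hlt₁) h1, h2⟩)

/-- A nonempty finset has a `lam`-least element. -/
lemma finset_exists_min {lam : LeftOrder G} {F' : Finset G} (hne : F'.Nonempty) :
    ∃ m ∈ F', ∀ f ∈ F', Le lam m f := by
  classical
  induction F' using Finset.induction_on with
  | empty => exact absurd hne (by simp)
  | @insert a F'' ha ih =>
      by_cases hne' : F''.Nonempty
      · obtain ⟨m, hm, hmin⟩ := ih hne'
        rcases le_total (lam := lam) m a with h | h
        · exact ⟨m, Finset.mem_insert_of_mem hm, fun f hf => by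
            rcases Finset.mem_insert.mp hf with rfl | hf
            · exact h
            · exact hmin f hf⟩
        · exact ⟨a, Finset.mem_insert_self a F'', fun f hf => by
            rcases Finset.mem_insert.mp hf with rfl | hf
            · exact le_refl f
            · exact le_trans' h (hmin f hf)⟩
      · have he : F'' = ∅ := Finset.not_nonempty_iff_eq_empty.mp hne'
        subst he
        refine ⟨a, Finset.mem_insert_self a ∅, fun f hf => ?_⟩
        rcases Finset.mem_insert.mp hf with rfl | hf
        · exact le_refl f
        · exact absurd hf (by simp)

include hF star in
lemma min_mem_C (hne : F.Nonempty) : ∃ m, m ≠ 1 ∧ m ∈ Cset lam F := by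
  obtain ⟨m, hmF, hmin⟩ := finset_exists_min (lam := lam) hne
  have hm1 : lam.lt 1 m := hF m hmF
  refine ⟨m, fun h => lam.irrefl 1 (h ▸ hm1), ?_⟩
  intro z hz
  have hz' : Le lam 1 z ∧ Le lam z m := by
    rcases hz with h | ⟨h1, h2⟩
    · exact h
    · exact ⟨le_trans' (le_of_lt hm1) h1, le_trans' h2 (le_of_lt hm1)⟩
  rcases hz'.1 with hz1 | hz1
  · intro f hf
    rcases trichotomy (lam := lam) z (f * z) with h | h | h
    · exact h
    · exfalso
      have hf1 : f = 1 := by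
        apply mul_right_cancel (b := z)
        rw [one_mul, ← h]
      exact lam.irrefl 1 (hf1 ▸ hF f hf)
    · exfalso
      have h1 : lam.lt f (f * z) := by
        have := lam.mul_left _ _ f hz1
        simpa using this
      have h2 : lam.lt f z := lam.trans _ _ _ h1 h
      have h3 : Le lam z f := le_trans' hz'.2 (hmin f hf)
      exact lam.irrefl f (lt_of_lt_of_le h2 h3)
  · rw [← hz1]
    exact one_mem_B hF

include hF star hconv in
/-- Right invariance: the order is bi-invariant. -/
lemma right_invariant (hne : F.Nonempty) :
    ∀ (x u v : G), lam.lt (u * x) (v * x) ↔ lam.lt u v := by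
  have hCtop : Csub lam F hF star = ⊤ := by
    rcases hconv _ (Csub_convex hF star) with hbot | htop
    · exfalso
      obtain ⟨m, hm1, hmC⟩ := min_mem_C hF star hne
      have hm : m ∈ Csub lam F hF star := hmC
      rw [hbot] at hm
      exact hm1 (Subgroup.mem_bot.mp hm)
    · exact htop
  intro x u v
  have hxC : x ∈ Csub lam F hF star := by rw [hCtop]; trivial
  have hxB : x ∈ Bset lam F := hxC x (btw_one_self x)
  exact ri_of_mem star hxB u v

end Core

/-! ### Consequences of right invariance -/

section RightInv

variable {lam : LeftOrder G}
  (RI : ∀ (x u v : G), lam.lt (u * x) (v * x) ↔ lam.lt u v)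
  (hconv : ∀ H : Subgroup G, lam.IsConvex H → H = ⊥ ∨ H = ⊤)

include RI

lemma le_mul_right {u v : G} (x : G) (h : Le lam u v) : Le lam (u * x) (v * x) := by
  rcases h with h | rfl
  · exact Or.inl ((RI x u v).mpr h)
  · exact Or.inr rfl

lemma mul_le_mul' {a b c d : G} (h1 : Le lam a b) (h2 : Le lam c d) :
    Le lam (a * c) (b * d) :=
  le_trans' (le_mul_left a h2) (le_mul_right RI d h1)

lemma mul_lt_mul_of_lt_of_le {a b c d : G} (h1 : lam.lt a b) (h2 : Le lam c d) :
    lam.lt (a * c) (b * d) :=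
  lt_of_lt_of_le ((RI c a b).mpr h1) (le_mul_left b h2)

lemma mul_lt_mul_of_le_of_lt {a b c d : G} (h1 : Le lam a b) (h2 : lam.lt c d) :
    lam.lt (a * c) (b * d) :=
  lt_of_le_of_lt (le_mul_right RI c h1) (lam.mul_left _ _ b h2)

omit RI in
lemma one_lt_pow {g : G} (hg : lam.lt 1 g) : ∀ n : ℕ, 0 < n → lam.lt 1 (g ^ n) := by
  intro n hn
  induction n with
  | zero => exact absurd hn (by simp)
  | succ k ih =>
      by_cases hk : 0 < k
      · have h1 : lam.lt 1 (g ^ k) := ih hk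
        have h2 : lam.lt (g ^ k) (g ^ k * g) := by
          have := lam.mul_left _ _ (g ^ k) hg
          simpa using this
        have := lam.trans _ _ _ h1 h2
        rwa [← pow_succ] at this
      · have hk0 : k = 0 := by omega
        subst hk0
        simpa using hg

lemma pow_le_pow_of_le {u v : G} (h : Le lam u v) : ∀ n : ℕ, Le lam (u ^ n) (v ^ n) := by
  intro n
  induction n with
  | zero => simp [le_refl]
  | succ k ih =>
      rw [pow_succ, pow_succ]
      exact mul_le_mul' RI ih h

omit RI in
lemma pow_le_one_of_le_one {g : G} (h : Le lam g 1) : ∀ n : ℕ, Le lam (g ^ n) 1 := by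
  intro n
  induction n with
  | zero => simp [le_refl]
  | succ k ih =>
      rw [pow_succ]
      have h2 : Le lam (g ^ k * g) (g ^ k * 1) := le_mul_left _ h
      rw [mul_one] at h2
      exact le_trans' h2 ih

section ZPow

variable {a : G} (ha : lam.lt 1 a)

omit RI in
include ha in
lemma zpow_lt_zpow {k l : ℤ} (h : k < l) : lam.lt (a ^ k) (a ^ l) := by
  have h1 : lam.lt 1 (a ^ (l - k)) := by
    have : l - k = ((l - k).toNat : ℤ) := by omega
    rw [this, zpow_natCast]
    exact one_lt_pow ha _ (by omega)
  have := lam.mul_left _ _ (a ^ k) h1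
  rw [mul_one, ← zpow_add] at this
  have heq : k + (l - k) = l := by ring
  rwa [heq] at this

omit RI in
include ha in
lemma zpow_le_zpow {k l : ℤ} (h : k ≤ l) : Le lam (a ^ k) (a ^ l) := by
  rcases eq_or_lt_of_le h with rfl | h
  · exact le_refl _
  · exact le_of_lt (zpow_lt_zpow ha h)

omit RI in
include ha in
lemma lt_of_zpow_lt {k l : ℤ} (h : lam.lt (a ^ k) (a ^ l)) : k < l := by
  by_contra hc
  push_neg at hc
  exact absurd h (not_lt_iff_le.mpr (zpow_le_zpow ha hc))

omit RI in
include ha in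
lemma zpow_injective {k l : ℤ} (h : a ^ k = a ^ l) : k = l := by
  by_contra hc
  rcases lt_or_gt_of_ne hc with h' | h'
  · exact lam.irrefl _ (h ▸ zpow_lt_zpow ha h')
  · exact lam.irrefl _ (h ▸ zpow_lt_zpow ha h')

omit RI in
include ha in
lemma one_lt_zpow_iff {k : ℤ} : lam.lt 1 (a ^ k) ↔ 0 < k := by
  constructor
  · intro h
    have := lt_of_zpow_lt ha (a := a) (k := 0) (l := k) (by simpa using h)
    exact this
  · intro h
    have := zpow_lt_zpow ha (k := 0) (l := k) h
    simpa using this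

end ZPow

omit RI in
lemma lt_of_not_le {x y : G} (h : ¬ Le lam x y) : lam.lt y x := by
  rcases trichotomy (lam := lam) x y with h' | h' | h'
  · exact absurd (le_of_lt h') h
  · exact absurd (Or.inr h') h
  · exact h'

/-- The convex subgroup of elements bounded by powers of `g`. -/
def Hsub (lam : LeftOrder G) {g : G}
    (RI : ∀ (x u v : G), lam.lt (u * x) (v * x) ↔ lam.lt u v)
    (hg : lam.lt 1 g) : Subgroup G where
  carrier := {x | ∃ n : ℕ, Le lam (g ^ (-(n:ℤ))) x ∧ Le lam x (g ^ (n:ℤ))}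
  one_mem' := ⟨0, by simp [le_refl]⟩
  mul_mem' := by
    rintro x y ⟨n, hn1, hn2⟩ ⟨m, hm1, hm2⟩
    refine ⟨n + m, ?_, ?_⟩
    · have h := mul_le_mul' RI hn1 hm1
      rw [← zpow_add] at h
      have e : (-(↑(n+m)):ℤ) = -(n:ℤ) + -(m:ℤ) := by push_cast; ring
      rw [e]
      exact h
    · have h := mul_le_mul' RI hn2 hm2
      rw [← zpow_add] at h
      have e : ((↑(n+m)):ℤ) = (n:ℤ) + (m:ℤ) := by push_cast; ring
      rw [e]
      exact h
  inv_mem' := by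
    rintro x ⟨n, hn1, hn2⟩
    refine ⟨n, ?_, ?_⟩
    · have h1 : Le lam 1 (x⁻¹ * g ^ (n:ℤ)) := by
        have := le_mul_left x⁻¹ hn2
        simpa using this
      have h2 := le_mul_right RI (g ^ (-(n:ℤ))) h1
      rw [one_mul, mul_assoc, ← zpow_add, add_neg_cancel, zpow_zero, mul_one] at h2
      exact h2
    · have h1 : Le lam (x⁻¹ * g ^ (-(n:ℤ))) 1 := by
        have := le_mul_left x⁻¹ hn1
        simpa using this
      have h2 := le_mul_right RI (g ^ ((n:ℤ))) h1
      rw [one_mul, mul_assoc, ← zpow_add, neg_add_cancel, zpow_zero, mul_one] at h2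
      exact h2

include hconv in
lemma arch {g : G} (hg : lam.lt 1 g) (h : G) : ∃ n : ℕ, lam.lt h (g ^ (n:ℤ)) := by
  have hconvex : lam.IsConvex (Hsub lam RI hg) := by
    rintro h₁ h₂ x ⟨n, hn1, _⟩ ⟨m, _, hm2⟩ hlt₁ hlt₂
    refine ⟨n + m, ?_, ?_⟩
    · apply le_trans' _ (le_of_lt hlt₁)
      apply le_trans' _ hn1
      apply zpow_le_zpow hg
      omega
    · apply le_trans' (le_of_lt hlt₂)
      apply le_trans' hm2
      apply zpow_le_zpow hg
      omega
  have htop : Hsub lam RI hg = ⊤ := by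
    rcases hconv _ hconvex with hbot | htop
    · exfalso
      have hgmem : g ∈ Hsub lam RI hg := by
        refine ⟨1, ?_, ?_⟩
        · apply le_of_lt
          have h1 : lam.lt (g ^ (-(1:ℤ))) 1 := by
            have := zpow_lt_zpow hg (k := (-1:ℤ)) (l := 0) (by norm_num)
            simpa using this
          have h2 := lam.trans _ _ _ h1 hg
          simpa using h2
        · simp [le_refl]
      rw [hbot] at hgmem
      have hg1 := Subgroup.mem_bot.mp hgmem
      exact lam.irrefl 1 (hg1 ▸ hg)
    · exact htop
  have hmem : h ∈ Hsub lam RI hg := by rw [htop]; trivial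
  obtain ⟨n, _, hn2⟩ := hmem
  refine ⟨n + 1, lt_of_le_of_lt hn2 ?_⟩
  apply zpow_lt_zpow hg
  omega

include hconv in
lemma exists_div {a : G} (ha : lam.lt 1 a) (g : G) :
    ∃ p : ℤ, Le lam (a ^ p) g ∧ lam.lt g (a ^ (p + 1)) := by
  have Hbdd : ∃ b : ℤ, ∀ z : ℤ, Le lam (a ^ z) g → z ≤ b := by
    obtain ⟨n, hn⟩ := arch RI hconv ha g
    refine ⟨n, fun z hz => ?_⟩
    by_contra hc
    push_neg at hc
    have h1 : Le lam (a ^ ((n:ℤ))) (a ^ z) := zpow_le_zpow ha (by omega)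
    exact lam.irrefl g (lt_of_lt_of_le hn (le_trans' h1 hz))
  have Hinh : ∃ z : ℤ, Le lam (a ^ z) g := by
    obtain ⟨n, hn⟩ := arch RI hconv ha g⁻¹
    refine ⟨-(n:ℤ), ?_⟩
    have h1 := lam.mul_left _ _ g hn
    rw [mul_inv_cancel] at h1
    have h2 := (RI (a ^ (-(n:ℤ))) 1 (g * a ^ (n:ℤ))).mpr h1
    rw [one_mul, mul_assoc, ← zpow_add] at h2
    simp only [add_neg_cancel, zpow_zero, mul_one] at h2
    exact le_of_lt h2
  obtain ⟨p, hp, hmax⟩ := Int.exists_greatest_of_bdd Hbdd Hinh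
  refine ⟨p, hp, ?_⟩
  have : ¬ Le lam (a ^ (p + 1)) g := fun hc => by
    have := hmax _ hc
    omega
  exact lt_of_not_le this

include hconv in
lemma div_unique {a : G} (ha : lam.lt 1 a) {g : G} {p r : ℤ}
    (hp1 : Le lam (a ^ p) g) (hp2 : lam.lt g (a ^ (p + 1)))
    (hr1 : Le lam (a ^ r) g) (hr2 : lam.lt g (a ^ (r + 1))) : p = r := by
  by_contra hc
  rcases lt_or_gt_of_ne hc with h | h
  · have h1 : Le lam (a ^ (p+1)) (a ^ r) := zpow_le_zpow ha (by omega)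
    exact lam.irrefl g (lt_of_lt_of_le hp2 (le_trans' h1 hr1))
  · have h1 : Le lam (a ^ (r+1)) (a ^ p) := zpow_le_zpow ha (by omega)
    exact lam.irrefl g (lt_of_lt_of_le hr2 (le_trans' h1 hp1))

/-! ### Commutativity in the dense case -/

include hconv in
lemma commutator_lt_sq {x : G} (hx : lam.lt 1 x) (g h : G) :
    lam.lt (g * h * g⁻¹ * h⁻¹) (x * x) := by
  obtain ⟨p, hp1, hp2⟩ := exists_div RI hconv hx g
  obtain ⟨q, hq1, hq2⟩ := exists_div RI hconv hx h
  have hginv : Le lam g⁻¹ (x ^ (-p)) := by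
    have h1 := le_mul_left g⁻¹ hp1
    rw [inv_mul_cancel] at h1
    have h2 := le_mul_right RI (x ^ (-p)) h1
    rwa [mul_assoc, ← zpow_add, add_neg_cancel, zpow_zero, mul_one, one_mul] at h2
  have hhinv : Le lam h⁻¹ (x ^ (-q)) := by
    have h1 := le_mul_left h⁻¹ hq1
    rw [inv_mul_cancel] at h1
    have h2 := le_mul_right RI (x ^ (-q)) h1
    rwa [mul_assoc, ← zpow_add, add_neg_cancel, zpow_zero, mul_one, one_mul] at h2
  have step1 : lam.lt (g * h) (x ^ (p+1) * x ^ (q+1)) :=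
    mul_lt_mul_of_lt_of_le RI hp2 (le_of_lt hq2)
  have step2 : lam.lt (g * h * g⁻¹) (x ^ (p+1) * x ^ (q+1) * x ^ (-p)) :=
    mul_lt_mul_of_lt_of_le RI step1 hginv
  have step3 : lam.lt (g * h * g⁻¹ * h⁻¹) (x ^ (p+1) * x ^ (q+1) * x ^ (-p) * x ^ (-q)) :=
    mul_lt_mul_of_lt_of_le RI step2 hhinv
  have e : x ^ (p+1) * x ^ (q+1) * x ^ (-p) * x ^ (-q) = x * x := by
    rw [← zpow_add, ← zpow_add, ← zpow_add]
    have : p + 1 + (q + 1) + -p + -q = 2 := by ring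
    rw [this]
    rw [show (2:ℤ) = 1 + 1 by norm_num, zpow_add, zpow_one]
  rwa [e] at step3

include hconv in
lemma exists_sq_le (hdense : ∀ c, lam.lt 1 c → ∃ y, lam.lt 1 y ∧ lam.lt y c)
    {c : G} (hc : lam.lt 1 c) : ∃ x, lam.lt 1 x ∧ Le lam (x * x) c := by
  obtain ⟨y, hy1, hy2⟩ := hdense c hc
  rcases le_total (lam := lam) y (y⁻¹ * c) with h | h
  · refine ⟨y, hy1, ?_⟩
    have := le_mul_left y h
    rwa [mul_inv_cancel_left] at this
  · refine ⟨y⁻¹ * c, ?_, ?_⟩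
    · have := lam.mul_left _ _ y⁻¹ hy2
      simpa using this
    · have h2 := le_mul_right RI (y⁻¹ * c) h
      rwa [mul_inv_cancel_left] at h2

include hconv in
lemma dense_comm (hdense : ∀ c, lam.lt 1 c → ∃ y, lam.lt 1 y ∧ lam.lt y c)
    (g h : G) : g * h = h * g := by
  have key : ∀ u v : G, ¬ lam.lt 1 (u * v * u⁻¹ * v⁻¹) := by
    intro u v hc
    obtain ⟨x, hx1, hx2⟩ := exists_sq_le RI hconv hdense hc
    exact lam.irrefl _ (lt_of_le_of_lt hx2 (commutator_lt_sq RI hconv hx1 u v))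
  have h1 : ¬ lam.lt 1 (g * h * g⁻¹ * h⁻¹) := key g h
  have h2 : ¬ lam.lt 1 (h * g * h⁻¹ * g⁻¹) := key h g
  have e : (g * h * g⁻¹ * h⁻¹)⁻¹ = h * g * h⁻¹ * g⁻¹ := by group
  have hcomm : g * h * g⁻¹ * h⁻¹ = 1 := by
    rcases trichotomy (lam := lam) 1 (g * h * g⁻¹ * h⁻¹) with hlt | heq | hlt
    · exact absurd hlt h1
    · exact heq.symm
    · exfalso
      apply h2
      rw [← e]
      rwa [← lt_one_iff_inv]
  have := congrArg (fun z => z * h * g) hcomm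
  simpa [mul_assoc] using this

end RightInv

/-! ### The Hölder homomorphism into ℝ -/

section Psi

open Filter Topology

variable {lam : LeftOrder G}
  (RI : ∀ (x u v : G), lam.lt (u * x) (v * x) ↔ lam.lt u v)
  (hconv : ∀ H : Subgroup G, lam.IsConvex H → H = ⊥ ∨ H = ⊤)
  {a : G} (ha : lam.lt 1 a)
  (hcomm : ∀ u v : G, u * v = v * u)

/-- `Ufun g n` is the integer part of `g^n` in base `a`. -/
noncomputable def Ufun (g : G) (n : ℕ) : ℤ :=
  (exists_div RI hconv ha (g ^ n)).choose

lemma Ufun_spec1 (g : G) (n : ℕ) : Le lam (a ^ (Ufun RI hconv ha g n)) (g ^ n) :=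
  (exists_div RI hconv ha (g ^ n)).choose_spec.1

lemma Ufun_spec2 (g : G) (n : ℕ) : lam.lt (g ^ n) (a ^ (Ufun RI hconv ha g n + 1)) :=
  (exists_div RI hconv ha (g ^ n)).choose_spec.2

lemma le_Ufun {g : G} {n : ℕ} {k : ℤ} (h : Le lam (a ^ k) (g ^ n)) :
    k ≤ Ufun RI hconv ha g n := by
  by_contra hc
  push_neg at hc
  have h1 : Le lam (a ^ (Ufun RI hconv ha g n + 1)) (a ^ k) := zpow_le_zpow ha (by omega)
  exact lam.irrefl _ (lt_of_lt_of_le (Ufun_spec2 RI hconv ha g n) (le_trans' h1 h))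

lemma Ufun_le {g : G} {n : ℕ} {k : ℤ} (h : lam.lt (g ^ n) (a ^ (k + 1))) :
    Ufun RI hconv ha g n ≤ k := by
  by_contra hc
  push_neg at hc
  have h1 : Le lam (a ^ (k + 1)) (a ^ (Ufun RI hconv ha g n)) := zpow_le_zpow ha (by omega)
  exact lam.irrefl _ (lt_of_lt_of_le h (le_trans' h1 (Ufun_spec1 RI hconv ha g n)))

lemma Ufun_zero (g : G) : Ufun RI hconv ha g 0 = 0 := by
  have h1 : (0:ℤ) ≤ Ufun RI hconv ha g 0 := by
    apply le_Ufun
    simp [le_refl]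
  have h2 : Ufun RI hconv ha g 0 ≤ 0 := by
    apply Ufun_le
    simpa using ha
  omega

lemma Ufun_superadd (g : G) (m n : ℕ) :
    Ufun RI hconv ha g m + Ufun RI hconv ha g n ≤ Ufun RI hconv ha g (m + n) := by
  apply le_Ufun
  have h := mul_le_mul' RI (Ufun_spec1 RI hconv ha g m) (Ufun_spec1 RI hconv ha g n)
  rwa [← zpow_add, ← pow_add] at h

lemma Ufun_subadd (g : G) (m n : ℕ) :
    Ufun RI hconv ha g (m + n) ≤ Ufun RI hconv ha g m + Ufun RI hconv ha g n + 1 := by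
  apply Ufun_le
  have h := mul_lt_mul_of_lt_of_le RI (Ufun_spec2 RI hconv ha g m)
    (le_of_lt (Ufun_spec2 RI hconv ha g n))
  rw [← zpow_add, ← pow_add] at h
  have e : Ufun RI hconv ha g m + 1 + (Ufun RI hconv ha g n + 1)
      = Ufun RI hconv ha g m + Ufun RI hconv ha g n + 1 + 1 := by ring
  rwa [e] at h

include hcomm in
lemma Ufun_mul_ge (g h : G) (n : ℕ) :
    Ufun RI hconv ha g n + Ufun RI hconv ha h n ≤ Ufun RI hconv ha (g * h) n := by
  apply le_Ufun
  have hc : Commute g h := hcomm g h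
  have hgh := mul_le_mul' RI (Ufun_spec1 RI hconv ha g n) (Ufun_spec1 RI hconv ha h n)
  rwa [← zpow_add, ← hc.mul_pow] at hgh

include hcomm in
lemma Ufun_mul_le (g h : G) (n : ℕ) :
    Ufun RI hconv ha (g * h) n ≤ Ufun RI hconv ha g n + Ufun RI hconv ha h n + 1 := by
  apply Ufun_le
  have hc : Commute g h := hcomm g h
  have hgh := mul_lt_mul_of_lt_of_le RI (Ufun_spec2 RI hconv ha g n)
    (le_of_lt (Ufun_spec2 RI hconv ha h n))
  rw [← zpow_add, ← hc.mul_pow] at hgh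
  have e : Ufun RI hconv ha g n + 1 + (Ufun RI hconv ha h n + 1)
      = Ufun RI hconv ha g n + Ufun RI hconv ha h n + 1 + 1 := by ring
  rwa [e] at hgh

lemma Ufun_sub (g : G) : Subadditive (fun n => -(Ufun RI hconv ha g n : ℝ)) := by
  intro m n
  have h := Ufun_superadd RI hconv ha g m n
  have h' : ((Ufun RI hconv ha g m : ℝ) + (Ufun RI hconv ha g n : ℝ))
      ≤ ((Ufun RI hconv ha g (m+n) : ℝ)) := by exact_mod_cast h
  show -(Ufun RI hconv ha g (m+n) : ℝ) ≤ -(Ufun RI hconv ha g m : ℝ) + -(Ufun RI hconv ha g n : ℝ)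
  linarith

lemma Ufun_linear (g : G) : ∀ n : ℕ, Ufun RI hconv ha g n ≤ n * (Ufun RI hconv ha g 1 + 1) := by
  intro n
  induction n with
  | zero => simp [Ufun_zero RI hconv ha g]
  | succ k ih =>
      have h := Ufun_subadd RI hconv ha g k 1
      have e : ((k+1:ℕ):ℤ) * (Ufun RI hconv ha g 1 + 1)
          = (k:ℤ) * (Ufun RI hconv ha g 1 + 1) + (Ufun RI hconv ha g 1 + 1) := by push_cast; ring
      rw [e]
      linarith

lemma Ufun_bdd (g : G) :
    BddBelow (Set.range fun n : ℕ => (-(Ufun RI hconv ha g n : ℝ)) / n) := by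
  refine ⟨-(|(Ufun RI hconv ha g 1 : ℝ)| + 1), ?_⟩
  rintro x ⟨n, rfl⟩
  rcases Nat.eq_zero_or_pos n with rfl | hn
  · simp only [Nat.cast_zero, div_zero]
    have hp : (0:ℝ) ≤ |(Ufun RI hconv ha g 1 : ℝ)| + 1 := by positivity
    linarith
  · have hlin := Ufun_linear RI hconv ha g n
    have hcast : (Ufun RI hconv ha g n : ℝ) ≤ (n : ℝ) * ((Ufun RI hconv ha g 1 : ℝ) + 1) := by
      exact_mod_cast hlin
    have hn' : (0:ℝ) < n := by exact_mod_cast hn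
    rw [le_div_iff₀ hn']
    have habs : (Ufun RI hconv ha g 1 : ℝ) + 1 ≤ |(Ufun RI hconv ha g 1 : ℝ)| + 1 := by
      have := le_abs_self (Ufun RI hconv ha g 1 : ℝ)
      linarith
    nlinarith [abs_nonneg ((Ufun RI hconv ha g 1 : ℝ))]

/-- The Hölder quasimorphism limit. -/
noncomputable def psi (g : G) : ℝ := -(Ufun_sub RI hconv ha g).lim

lemma tendsto_psi (g : G) :
    Tendsto (fun n : ℕ => (Ufun RI hconv ha g n : ℝ) / n) atTop (𝓝 (psi RI hconv ha g)) := by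
  have h := (Ufun_sub RI hconv ha g).tendsto_lim (Ufun_bdd RI hconv ha g)
  have h2 := h.neg
  have he : (fun n : ℕ => -((-(Ufun RI hconv ha g n : ℝ))/n))
      = fun n : ℕ => (Ufun RI hconv ha g n : ℝ)/n := by
    funext n; rw [neg_div, neg_neg]
  rw [he] at h2
  exact h2

include hcomm in
lemma psi_add (g h : G) :
    psi RI hconv ha (g * h) = psi RI hconv ha g + psi RI hconv ha h := by
  have T1 := tendsto_psi RI hconv ha g
  have T2 := tendsto_psi RI hconv ha h
  have T3 := tendsto_psi RI hconv ha (g * h)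
  have Td : Tendsto (fun n : ℕ => (Ufun RI hconv ha (g*h) n : ℝ)/n
      - ((Ufun RI hconv ha g n : ℝ)/n + (Ufun RI hconv ha h n : ℝ)/n)) atTop
      (𝓝 (psi RI hconv ha (g*h) - (psi RI hconv ha g + psi RI hconv ha h))) :=
    T3.sub (T1.add T2)
  have T0 : Tendsto (fun n : ℕ => (Ufun RI hconv ha (g*h) n : ℝ)/n
      - ((Ufun RI hconv ha g n : ℝ)/n + (Ufun RI hconv ha h n : ℝ)/n)) atTop (𝓝 0) := by
    apply tendsto_of_tendsto_of_tendsto_of_le_of_le' tendsto_const_nhds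
      tendsto_one_div_atTop_nhds_zero_nat
    · filter_upwards [eventually_ge_atTop 1] with n hn
      have hn' : (0:ℝ) < n := by
        have : (1:ℝ) ≤ n := by exact_mod_cast hn
        linarith
      have h1 := Ufun_mul_ge RI hconv ha hcomm g h n
      have h1' : (Ufun RI hconv ha g n : ℝ) + (Ufun RI hconv ha h n : ℝ)
          ≤ (Ufun RI hconv ha (g*h) n : ℝ) := by exact_mod_cast h1
      have e : (Ufun RI hconv ha (g*h) n : ℝ)/n
          - ((Ufun RI hconv ha g n : ℝ)/n + (Ufun RI hconv ha h n : ℝ)/n)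
          = ((Ufun RI hconv ha (g*h) n : ℝ)
            - ((Ufun RI hconv ha g n : ℝ) + (Ufun RI hconv ha h n : ℝ)))/n := by ring
      rw [e]
      exact div_nonneg (by linarith) hn'.le
    · filter_upwards [eventually_ge_atTop 1] with n hn
      have hn' : (0:ℝ) < n := by
        have : (1:ℝ) ≤ n := by exact_mod_cast hn
        linarith
      have h1 := Ufun_mul_le RI hconv ha hcomm g h n
      have h1' : (Ufun RI hconv ha (g*h) n : ℝ)
          ≤ (Ufun RI hconv ha g n : ℝ) + (Ufun RI hconv ha h n : ℝ) + 1 := by exact_mod_cast h1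
      have e : (Ufun RI hconv ha (g*h) n : ℝ)/n
          - ((Ufun RI hconv ha g n : ℝ)/n + (Ufun RI hconv ha h n : ℝ)/n)
          = ((Ufun RI hconv ha (g*h) n : ℝ)
            - ((Ufun RI hconv ha g n : ℝ) + (Ufun RI hconv ha h n : ℝ)))/n := by ring
      rw [e, div_le_div_iff₀ hn' hn']
      nlinarith
  have := tendsto_nhds_unique Td T0
  linarith

lemma psi_one : psi RI hconv ha (1:G) = 0 := by
  have hU : ∀ n : ℕ, Ufun RI hconv ha (1:G) n = 0 := by
    intro n
    have h1 : (0:ℤ) ≤ Ufun RI hconv ha (1:G) n := le_Ufun RI hconv ha (by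
      simpa using le_refl (lam := lam) (1:G))
    have h2 : Ufun RI hconv ha (1:G) n ≤ 0 := Ufun_le RI hconv ha (by simpa using ha)
    omega
  have T := tendsto_psi RI hconv ha (1:G)
  have T' : Tendsto (fun n : ℕ => (Ufun RI hconv ha (1:G) n : ℝ)/n) atTop (𝓝 0) := by
    simp only [hU, Int.cast_zero, zero_div]
    exact tendsto_const_nhds
  exact tendsto_nhds_unique T T'

lemma psi_a : psi RI hconv ha a = 1 := by
  have hU : ∀ n : ℕ, Ufun RI hconv ha a n = n := by
    intro n
    have h1 : (n:ℤ) ≤ Ufun RI hconv ha a n := le_Ufun RI hconv ha (by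
      rw [zpow_natCast]
      exact le_refl _)
    have h2 : Ufun RI hconv ha a n ≤ (n:ℤ) := Ufun_le RI hconv ha (by
      rw [← zpow_natCast a n]
      exact zpow_lt_zpow ha (by omega))
    omega
  have T := tendsto_psi RI hconv ha a
  have T' : Tendsto (fun n : ℕ => (Ufun RI hconv ha a n : ℝ)/n) atTop (𝓝 1) := by
    have hev : (fun n : ℕ => (Ufun RI hconv ha a n : ℝ)/n) =ᶠ[atTop] fun _ => (1:ℝ) := by
      filter_upwards [eventually_ge_atTop 1] with n hn
      rw [hU n]
      have hn' : (n:ℝ) ≠ 0 := by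
        have : (1:ℝ) ≤ n := by exact_mod_cast hn
        linarith
      field_simp
      norm_cast
    exact (tendsto_congr' hev).mpr tendsto_const_nhds
  exact tendsto_nhds_unique T T'

lemma psi_nonpos {g : G} (hg : Le lam g 1) : psi RI hconv ha g ≤ 0 := by
  have hU : ∀ n : ℕ, Ufun RI hconv ha g n ≤ 0 := fun n => Ufun_le RI hconv ha (by
    have h1 := pow_le_one_of_le_one (lam := lam) hg n
    refine lt_of_le_of_lt h1 ?_
    simpa using ha)
  apply le_of_tendsto (tendsto_psi RI hconv ha g)
  filter_upwards [eventually_ge_atTop 1] with n hn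
  rw [div_nonpos_iff]
  right
  constructor
  · exact_mod_cast hU n
  · positivity

include hcomm in
lemma psi_pow (g : G) : ∀ k : ℕ, psi RI hconv ha (g ^ k) = k * psi RI hconv ha g := by
  intro k
  induction k with
  | zero => rw [pow_zero, psi_one RI hconv ha]; simp
  | succ m ih =>
      rw [pow_succ, psi_add RI hconv ha hcomm, ih]
      push_cast
      ring

include hcomm in
lemma psi_inv (g : G) : psi RI hconv ha g⁻¹ = - psi RI hconv ha g := by
  have h := psi_add RI hconv ha hcomm g g⁻¹
  rw [mul_inv_cancel, psi_one RI hconv ha] at h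
  linarith

include hcomm in
lemma psi_pos {g : G} (hg : lam.lt 1 g) : 0 < psi RI hconv ha g := by
  obtain ⟨k, hk⟩ := arch RI hconv hg a
  have hk0 : k ≠ 0 := by
    intro h
    rw [h] at hk
    simp only [Nat.cast_zero, zpow_zero] at hk
    exact asymm ha hk
  have hks : Le lam a (g ^ k) := le_of_lt (by rw [← zpow_natCast g k]; exact hk)
  have hU : ∀ n : ℕ, (n:ℤ) ≤ Ufun RI hconv ha (g ^ k) n := by
    intro n
    apply le_Ufun
    have h := pow_le_pow_of_le RI hks n
    rw [zpow_natCast]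
    exact h
  have h1 : 1 ≤ psi RI hconv ha (g ^ k) := by
    apply ge_of_tendsto (tendsto_psi RI hconv ha (g ^ k))
    filter_upwards [eventually_ge_atTop 1] with n hn
    have hn' : (0:ℝ) < n := by
      have : (1:ℝ) ≤ n := by exact_mod_cast hn
      linarith
    rw [le_div_iff₀ hn', one_mul]
    exact_mod_cast hU n
  rw [psi_pow RI hconv ha hcomm g k] at h1
  have hkpos : (0:ℝ) < k := by exact_mod_cast Nat.pos_of_ne_zero hk0
  nlinarith

include hcomm in
lemma psi_zpow (g : G) (m : ℤ) : psi RI hconv ha (g ^ m) = m * psi RI hconv ha g := by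
  rcases Int.eq_nat_or_neg m with ⟨n, rfl | rfl⟩
  · rw [zpow_natCast, psi_pow RI hconv ha hcomm]
    push_cast
    ring
  · rw [zpow_neg, zpow_natCast, psi_inv RI hconv ha hcomm, psi_pow RI hconv ha hcomm]
    push_cast
    ring

include hcomm in
lemma eq_one_of_psi_eq_zero {g : G} (h : psi RI hconv ha g = 0) : g = 1 := by
  rcases trichotomy (lam := lam) 1 g with hg | hg | hg
  · exact absurd h (ne_of_gt (psi_pos RI hconv ha hcomm hg))
  · exact hg.symm
  · exfalso
    have h1 : lam.lt 1 g⁻¹ := lt_one_iff_inv.mp hg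
    have h2 := psi_pos RI hconv ha hcomm h1
    rw [psi_inv RI hconv ha hcomm, h] at h2
    simp at h2

include hcomm in
lemma one_lt_of_psi_pos {g : G} (h : 0 < psi RI hconv ha g) : lam.lt 1 g := by
  rcases trichotomy (lam := lam) 1 g with hg | hg | hg
  · exact hg
  · exfalso
    rw [← hg, psi_one RI hconv ha] at h
    exact lt_irrefl _ h
  · exfalso
    have := psi_nonpos RI hconv ha (le_of_lt hg)
    linarith

end Psi

/-! ### Commensurability via perturbed orders -/

section Commens

open Filter Topology

variable {lam : LeftOrder G} {F : Finset G}
  (hF : ∀ f ∈ F, lam.lt 1 f)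
  (star : ∀ mu : LeftOrder G, (∀ f ∈ F, mu.lt 1 f) → mu = lam)
  (RI : ∀ (x u v : G), lam.lt (u * x) (v * x) ↔ lam.lt u v)
  (hconv : ∀ H : Subgroup G, lam.IsConvex H → H = ⊥ ∨ H = ⊤)
  {a : G} (ha : lam.lt 1 a)
  (hcomm : ∀ u v : G, u * v = v * u)

include hF star RI hconv ha hcomm in
lemma commensurable (hne : F.Nonempty) {b : G} (hb : lam.lt 1 b) :
    ∃ m n : ℤ, 0 < n ∧ b ^ n = a ^ m := by
  by_contra hinc
  push_neg at hinc
  set θ := psi RI hconv ha b with hθdef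
  -- θ is irrational
  have hirr : Irrational θ := by
    rintro ⟨q, hq⟩
    have hden : (0:ℤ) < (q.den : ℤ) := by exact_mod_cast q.pos
    have hpsi0 : psi RI hconv ha (b ^ (q.den:ℤ) * a ^ (-(q.num))) = 0 := by
      rw [psi_add RI hconv ha hcomm, psi_zpow RI hconv ha hcomm, psi_zpow RI hconv ha hcomm,
        psi_a RI hconv ha]
      rw [← hθdef, ← hq]
      rw [Rat.cast_def]
      have : (q.den : ℝ) ≠ 0 := by
        have := q.pos
        positivity
      field_simp
      push_cast
      ring
    have heq1 := eq_one_of_psi_eq_zero RI hconv ha hcomm hpsi0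
    have heq2 : b ^ (q.den:ℤ) = a ^ (q.num) := by
      have h1 : b ^ (q.den:ℤ) = (a ^ (-(q.num)))⁻¹ := by
        rw [eq_inv_iff_mul_eq_one]
        exact heq1
      rw [h1, ← zpow_neg, neg_neg]
    exact hinc q.num (q.den:ℤ) hden heq2
  -- linear functional χ on ℝ over ℚ with χ 1 = 0, χ θ = 1
  have hθ1 : θ ≠ 1 := by
    intro h
    exact hirr ⟨1, by rw [h]; norm_num⟩
  have hli : LinearIndependent ℚ ((↑) : ({θ, 1} : Set ℝ) → ℝ) := by
    rw [show ({θ, 1} : Set ℝ) = insert θ {1} from rfl]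
    show LinearIndepOn ℚ id (insert θ {1})
    rw [linearIndepOn_id_insert (by simpa using hθ1)]
    constructor
    · exact (linearIndepOn_singleton_iff ℚ).mpr one_ne_zero
    · intro hmem
      rw [Submodule.mem_span_singleton] at hmem
      obtain ⟨c, hc⟩ := hmem
      exact hirr ⟨c, by rw [← hc]; simp [Rat.smul_def]⟩
  let bas := Module.Basis.extend hli
  have hsub := (show LinearIndepOn ℚ id ({θ, 1} : Set ℝ) from hli).subset_extend (Set.subset_univ _)
  let iθ : (show LinearIndepOn ℚ id ({θ, 1} : Set ℝ) from hli).extend (Set.subset_univ _) := ⟨θ, hsub (by simp)⟩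
  let i1 : (show LinearIndepOn ℚ id ({θ, 1} : Set ℝ) from hli).extend (Set.subset_univ _) := ⟨(1:ℝ), hsub (by simp)⟩
  let χ : ℝ →ₗ[ℚ] ℚ := bas.coord iθ
  have hχθ : χ θ = 1 := by
    have e1 : χ (bas iθ) = 1 := by
      show bas.coord iθ (bas iθ) = 1
      rw [Module.Basis.coord_apply, Module.Basis.repr_self, Finsupp.single_eq_same]
    exact (congrArg χ (Module.Basis.extend_apply_self hli iθ)).symm.trans e1
  have hχ1 : χ 1 = 0 := by
    have hne' : i1 ≠ iθ := by
      intro h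
      apply hθ1
      have := congrArg Subtype.val h
      simp only [i1, iθ] at this
      exact this.symm
    have e1 : χ (bas i1) = 0 := by
      show bas.coord iθ (bas i1) = 0
      rw [Module.Basis.coord_apply, Module.Basis.repr_self, Finsupp.single_eq_of_ne hne'.symm]
    exact (congrArg χ (Module.Basis.extend_apply_self hli i1)).symm.trans e1
  -- the perturbation parameter
  set ε : ℝ := F.inf' hne (fun f => psi RI hconv ha f / (|((χ (psi RI hconv ha f) : ℚ) : ℝ)| + 1))
    with hεdef
  have hεpos : 0 < ε := by
    rw [hεdef, Finset.lt_inf'_iff]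
    intro f hf
    apply div_pos (psi_pos RI hconv ha hcomm (hF f hf))
    positivity
  -- the perturbed additive map
  set T : G → ℝ := fun g => psi RI hconv ha g + ε * ((χ (psi RI hconv ha g) : ℚ) : ℝ)
    with hTdef
  have hT_add : ∀ u v : G, T (u * v) = T u + T v := by
    intro u v
    simp only [hTdef, psi_add RI hconv ha hcomm u v, map_add]
    push_cast
    ring
  have hT_one : T 1 = 0 := by
    simp only [hTdef, psi_one RI hconv ha, map_zero]
    push_cast
    ring
  have hT_inv : ∀ u : G, T u⁻¹ = - T u := by
    intro u
    have := hT_add u u⁻¹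
    rw [mul_inv_cancel, hT_one] at this
    linarith
  -- the perturbed cone
  set Q : G → Prop := fun g => 0 < T g ∨ (T g = 0 ∧ lam.lt 1 g) with hQdef
  have hQ1 : ¬ Q 1 := by
    rintro (h | ⟨h, h2⟩)
    · rw [hT_one] at h; exact lt_irrefl _ h
    · exact lam.irrefl 1 h2
  have hQmul : ∀ x y, Q x → Q y → Q (x * y) := by
    rintro x y (hx | ⟨hx, hx2⟩) (hy | ⟨hy, hy2⟩)
    · exact Or.inl (by rw [hT_add]; linarith)
    · exact Or.inl (by rw [hT_add]; linarith)
    · exact Or.inl (by rw [hT_add]; linarith)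
    · refine Or.inr ⟨by rw [hT_add]; linarith, ?_⟩
      have h1 := lam.mul_left _ _ x hy2
      rw [mul_one] at h1
      exact lam.trans _ _ _ hx2 h1
  have hQtot : ∀ x, x ≠ 1 → Q x ∨ Q x⁻¹ := by
    intro x hx
    rcases lt_trichotomy (T x) 0 with h | h | h
    · right; left; rw [hT_inv]; linarith
    · rcases lam.total 1 x (fun h' => hx h'.symm) with h' | h'
      · exact Or.inl (Or.inr ⟨h, h'⟩)
      · right; right
        refine ⟨by rw [hT_inv]; linarith, lt_one_iff_inv.mp h'⟩
    · exact Or.inl (Or.inl h)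
  set muQ := mkOrder Q hQ1 hQmul hQtot with hmuQdef
  have hmuQF : ∀ f ∈ F, muQ.lt 1 f := by
    intro f hf
    show Q ((1:G)⁻¹ * f)
    rw [inv_one, one_mul]
    left
    -- 0 < T f
    set p := psi RI hconv ha f with hp
    set c := ((χ (psi RI hconv ha f) : ℚ) : ℝ) with hc
    have hppos : 0 < p := psi_pos RI hconv ha hcomm (hF f hf)
    have hεle : ε ≤ p / (|c| + 1) := by
      rw [hεdef]
      exact Finset.inf'_le _ hf
    have habs : 0 ≤ |c| := abs_nonneg c
    have h1 : ε * (|c| + 1) ≤ p := by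
      rw [div_eq_mul_inv] at hεle
      have h2 : 0 < |c| + 1 := by linarith
      calc ε * (|c| + 1) ≤ (p * (|c| + 1)⁻¹) * (|c| + 1) := by
            apply mul_le_mul_of_nonneg_right hεle h2.le
        _ = p := by field_simp
    have h3 : -|c| ≤ c := neg_abs_le c
    show 0 < p + ε * c
    nlinarith
  have heq := star muQ hmuQF
  -- the witness element
  set y : ℝ := -2/ε with hydef
  have hyneg : y < 0 := by
    rw [hydef]
    apply div_neg_of_neg_of_pos (by norm_num) hεpos
  set n₀ : ℤ := ⌊y⌋ - 1 with hn₀def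
  have hn₀y : (n₀ : ℝ) ≤ y := by
    rw [hn₀def]
    push_cast
    have := Int.floor_le y
    linarith
  have hn₀neg : n₀ < 0 := by
    have : (n₀:ℝ) < 0 := hn₀y.trans_lt hyneg
    exact_mod_cast this
  set m₀ : ℤ := -⌊(n₀:ℝ) * θ⌋ with hm₀def
  set x : ℝ := Int.fract ((n₀:ℝ) * θ) with hxdef
  have hx01 : 0 < x ∧ x < 1 := by
    constructor
    · rw [hxdef, Int.fract_pos]
      intro hcon
      have hirr2 : Irrational ((n₀:ℝ) * θ) := hirr.intCast_mul (by omega)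
      exact hirr2.ne_int ⌊(n₀:ℝ) * θ⌋ hcon
    · rw [hxdef]; exact Int.fract_lt_one _
  set gw : G := a ^ m₀ * b ^ n₀ with hgwdef
  have hpsigw : psi RI hconv ha gw = x := by
    rw [hgwdef, psi_add RI hconv ha hcomm, psi_zpow RI hconv ha hcomm,
      psi_zpow RI hconv ha hcomm, psi_a RI hconv ha, ← hθdef]
    rw [hxdef, Int.fract, hm₀def]
    push_cast
    ring
  have hχgw : (χ (psi RI hconv ha gw) : ℚ) = (n₀ : ℚ) := by
    rw [hpsigw]
    have hxeq : x = (m₀:ℚ) • (1:ℝ) + (n₀:ℚ) • θ := by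
      rw [Rat.smul_def, Rat.smul_def, hxdef, Int.fract, hm₀def]
      push_cast
      ring
    rw [hxeq, map_add, map_smul, map_smul, hχ1, hχθ]
    simp
  have hlt1gw : lam.lt 1 gw := by
    apply one_lt_of_psi_pos RI hconv ha hcomm
    rw [hpsigw]
    exact hx01.1
  have hTgw : T gw < 0 := by
    rw [hTdef]
    simp only
    rw [hχgw, hpsigw]
    have h1 : ε * (n₀:ℝ) ≤ ε * y := mul_le_mul_of_nonneg_left hn₀y hεpos.le
    have h2 : ε * y = -2 := by
      rw [hydef]
      field_simp
    push_cast
    nlinarith [hx01.2]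
  -- contradiction
  have hQgw : Q gw := by
    have h := congrFun (congrFun (congrArg LeftOrder.lt heq) 1) gw
    have h2 : muQ.lt 1 gw := by rw [h]; exact hlt1gw
    have h3 : Q ((1:G)⁻¹ * gw) := h2
    rwa [inv_one, one_mul] at h3
  rcases hQgw with h | ⟨h, _⟩
  · linarith
  · linarith

end Commens

/-! ### The homomorphism into ℚ -/

section Phi

variable {lam : LeftOrder G} {a : G} (ha : lam.lt 1 a)
  (hcomm : ∀ u v : G, u * v = v * u)

include ha in
lemma one_lt_zpow_of_pos {g : G} (hg : lam.lt 1 g) {n : ℤ} (hn : 0 < n) :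
    lam.lt 1 (g ^ n) := by
  have h : n = ((n.toNat : ℕ) : ℤ) := by omega
  rw [h, zpow_natCast]
  exact one_lt_pow hg _ (by omega)

lemma zpow_le_one_of_le_one' {g : G} (hg : Le lam g 1) {n : ℤ} (hn : 0 < n) :
    Le lam (g ^ n) 1 := by
  have h : n = ((n.toNat : ℕ) : ℤ) := by omega
  rw [h, zpow_natCast]
  exact pow_le_one_of_le_one hg _

include ha hcomm in
lemma final (hcom : ∀ g : G, ∃ n m : ℤ, 0 < n ∧ g ^ n = a ^ m) :
    ∃ φ : G → ℚ, (∀ g g' : G, φ (g * g') = φ g + φ g') ∧ Function.Injective φ ∧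
      ((∀ g g' : G, lam.lt g g' ↔ φ g < φ g') ∨
       (∀ g g' : G, lam.lt g g' ↔ φ g' < φ g)) := by
  classical
  set φ : G → ℚ := fun g => (((hcom g).choose_spec.choose : ℚ) / ((hcom g).choose : ℚ)) with hφ
  have hspec : ∀ g : G, 0 < (hcom g).choose ∧
      g ^ (hcom g).choose = a ^ (hcom g).choose_spec.choose :=
    fun g => (hcom g).choose_spec.choose_spec
  have phi_eq : ∀ (g : G) (n m : ℤ), 0 < n → g ^ n = a ^ m → φ g = (m:ℚ)/(n:ℚ) := by
    intro g n m hn he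
    obtain ⟨hn0, he0⟩ := hspec g
    have h1 : g ^ ((hcom g).choose * n) = a ^ ((hcom g).choose_spec.choose * n) := by
      rw [zpow_mul g, zpow_mul a]
      exact congrArg (fun w => w ^ n) he0
    have h2 : g ^ ((hcom g).choose * n) = a ^ (m * (hcom g).choose) := by
      rw [mul_comm ((hcom g).choose) n, zpow_mul g, zpow_mul a]
      exact congrArg (fun w => w ^ (hcom g).choose) he
    have h3 : (hcom g).choose_spec.choose * n = m * (hcom g).choose :=
      zpow_injective ha (h1.symm.trans h2)
    show (((hcom g).choose_spec.choose : ℚ) / ((hcom g).choose : ℚ)) = (m:ℚ)/(n:ℚ)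
    rw [div_eq_div_iff (by exact_mod_cast hn0.ne') (by exact_mod_cast hn.ne')]
    exact_mod_cast h3
  have phi_add : ∀ u v : G, φ (u * v) = φ u + φ v := by
    intro u v
    obtain ⟨n1, m1, hn1, he1⟩ := hcom u
    obtain ⟨n2, m2, hn2, he2⟩ := hcom v
    have hc : Commute u v := hcomm u v
    have he : (u * v) ^ (n1 * n2) = a ^ (m1 * n2 + m2 * n1) := by
      rw [hc.mul_zpow, zpow_add]
      congr 1
      · rw [zpow_mul, he1, ← zpow_mul]
      · rw [mul_comm n1 n2, zpow_mul, he2, ← zpow_mul]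
    rw [phi_eq (u*v) _ _ (mul_pos hn1 hn2) he, phi_eq u n1 m1 hn1 he1,
      phi_eq v n2 m2 hn2 he2]
    have h1 : (n1:ℚ) ≠ 0 := by exact_mod_cast hn1.ne'
    have h2 : (n2:ℚ) ≠ 0 := by exact_mod_cast hn2.ne'
    push_cast
    field_simp
    try ring
  have phi_one : φ 1 = 0 := by
    have h : (1:G) ^ (1:ℤ) = a ^ (0:ℤ) := by simp
    rw [phi_eq 1 1 0 one_pos h]
    simp
  have phi_inv : ∀ g : G, φ g⁻¹ = - φ g := by
    intro g
    have h := phi_add g g⁻¹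
    rw [mul_inv_cancel, phi_one] at h
    linarith
  have phi_pos : ∀ g : G, lam.lt 1 g ↔ 0 < φ g := by
    intro g
    obtain ⟨hn0, he0⟩ := hspec g
    constructor
    · intro hg
      have h1 : lam.lt 1 (a ^ (hcom g).choose_spec.choose) := by
        rw [← he0]
        exact one_lt_zpow_of_pos ha hg hn0
      have hm : 0 < (hcom g).choose_spec.choose := (one_lt_zpow_iff ha).mp h1
      show 0 < (((hcom g).choose_spec.choose : ℚ) / ((hcom g).choose : ℚ))
      apply div_pos
      · exact_mod_cast hm
      · exact_mod_cast hn0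
    · intro hg
      by_contra hg'
      have hle : Le lam g 1 := not_lt_iff_le.mp hg'
      have h1 : Le lam (g ^ (hcom g).choose) 1 := zpow_le_one_of_le_one' hle hn0
      have hm : (hcom g).choose_spec.choose ≤ 0 := by
        by_contra hm'
        push_neg at hm'
        have h2 : lam.lt 1 (a ^ (hcom g).choose_spec.choose) :=
          (one_lt_zpow_iff ha).mpr hm'
        rw [← he0] at h2
        exact lam.irrefl 1 (lt_of_lt_of_le h2 h1)
      have hnonpos : φ g ≤ 0 := by
        show (((hcom g).choose_spec.choose : ℚ) / ((hcom g).choose : ℚ)) ≤ 0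
        apply div_nonpos_of_nonpos_of_nonneg
        · exact_mod_cast hm
        · exact_mod_cast hn0.le
      linarith
  have phi_zero : ∀ g : G, φ g = 0 → g = 1 := by
    intro g h0
    rcases trichotomy (lam := lam) 1 g with hg | hg | hg
    · have := (phi_pos g).mp hg
      rw [h0] at this
      exact absurd this (lt_irrefl 0)
    · exact hg.symm
    · exfalso
      have hg' : lam.lt 1 g⁻¹ := lt_one_iff_inv.mp hg
      have := (phi_pos g⁻¹).mp hg'
      rw [phi_inv, h0] at this
      simp at this
  refine ⟨φ, phi_add, ?_, Or.inl ?_⟩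
  · intro u v huv
    have h1 : φ (u * v⁻¹) = 0 := by
      rw [phi_add, phi_inv, huv]
      ring
    have h2 := phi_zero _ h1
    rwa [mul_inv_eq_one] at h2
  · intro g g'
    have key : lam.lt g g' ↔ 0 < φ (g⁻¹ * g') := by
      rw [lt_iff_one_lt]
      exact phi_pos _
    rw [key, phi_add g⁻¹ g', phi_inv]
    constructor <;> intro h <;> linarith

end Phi

end LeftOrderAux


/-- If `λ` is an isolated left order on a countable group `G` whose only
`λ`-convex subgroups are `{e}` and `G`, then there is an injective homomorphism
`φ : G → (ℚ, +)` which is either order-preserving or order-reversing with respect to `λ`.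
In particular `G` is isomorphic to a subgroup of `(ℚ,+)` and `λ` is the order induced by
such an embedding into `ℚ ⊂ ℝ`, or its reciprocal. -/
theorem isolated_leftOrder_no_proper_convex_rational
    {G : Type*} [Group G] [Countable G] (lam : LeftOrder G) (hiso : lam.IsIsolated)
    (hconv : ∀ H : Subgroup G, lam.IsConvex H → H = ⊥ ∨ H = ⊤) :
    ∃ φ : G → ℚ, (∀ g g' : G, φ (g * g') = φ g + φ g') ∧ Function.Injective φ ∧
      ((∀ g g' : G, lam.lt g g' ↔ φ g < φ g') ∨
       (∀ g g' : G, lam.lt g g' ↔ φ g' < φ g)) := by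
  classical
  open LeftOrderAux in
  obtain ⟨F, hF, star⟩ := LeftOrderAux.exists_finset_star lam hiso
  by_cases htriv : ∀ g : G, g = 1
  · refine ⟨fun _ => 0, by simp, ?_, Or.inl ?_⟩
    · intro x y _
      rw [htriv x, htriv y]
    · intro g g'
      constructor
      · intro h
        exfalso
        rw [htriv g, htriv g'] at h
        exact lam.irrefl 1 h
      · intro h
        exact absurd h (lt_irrefl 0)
  · push_neg at htriv
    obtain ⟨g₀, hg₀⟩ := htriv
    -- F is nonempty
    have hne : F.Nonempty := by
      by_contra hemp
      rw [Finset.not_nonempty_iff_eq_empty] at hemp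
      subst hemp
      set rev : LeftOrder G :=
        { lt := fun u v => lam.lt v u
          irrefl := fun g => lam.irrefl g
          trans := fun f g h h1 h2 => lam.trans h g f h2 h1
          total := fun f g hfg => Or.symm (lam.total f g hfg)
          mul_left := fun f g h h1 => lam.mul_left g f h h1 } with hrev
      have heq := star rev (by simp)
      rcases lam.total 1 g₀ (fun h => hg₀ h.symm) with h1 | h1
      · have h2 := congrFun (congrFun (congrArg LeftOrder.lt heq) 1) g₀
        have h3 : rev.lt 1 g₀ := h2.symm ▸ h1
        exact lam.irrefl _ (lam.trans _ _ _ h1 h3)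
      · have h2 := congrFun (congrFun (congrArg LeftOrder.lt heq) g₀) 1
        have h3 : rev.lt g₀ 1 := h2.symm ▸ h1
        exact lam.irrefl _ (lam.trans _ _ _ h1 h3)
    have RI := LeftOrderAux.right_invariant hF star hconv hne
    by_cases hmin : ∃ z : G, lam.lt 1 z ∧ ∀ y, lam.lt 1 y → LeftOrderAux.Le lam z y
    · -- G is cyclic generated by the least positive element
      obtain ⟨z, hz, hzmin⟩ := hmin
      have hpow : ∀ g : G, ∃ p : ℤ, g = z ^ p := by
        intro g
        obtain ⟨p, hp1, hp2⟩ := LeftOrderAux.exists_div RI hconv hz g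
        refine ⟨p, ?_⟩
        have hw1 : LeftOrderAux.Le lam 1 (z ^ (-p) * g) := by
          have h := LeftOrderAux.le_mul_left (z ^ (-p)) hp1
          rw [← zpow_add, neg_add_cancel, zpow_zero] at h
          exact h
        have hw2 : lam.lt (z ^ (-p) * g) z := by
          have h := lam.mul_left _ _ (z ^ (-p)) hp2
          rw [← zpow_add] at h
          have e : -p + (p + 1) = 1 := by ring
          rw [e, zpow_one] at h
          exact h
        rcases hw1 with h | h
        · exfalso
          have h4 := hzmin _ h
          exact lam.irrefl z (LeftOrderAux.lt_of_le_of_lt h4 hw2)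
        · have : z ^ p * 1 = z ^ p * (z ^ (-p) * g) := by rw [← h]
          rw [mul_one, ← mul_assoc, ← zpow_add, add_neg_cancel, zpow_zero, one_mul] at this
          exact this.symm
      have hcomm : ∀ u v : G, u * v = v * u := by
        intro u v
        obtain ⟨p, rfl⟩ := hpow u
        obtain ⟨q, rfl⟩ := hpow v
        rw [← zpow_add, ← zpow_add, add_comm]
      have hcom : ∀ g : G, ∃ n m : ℤ, 0 < n ∧ g ^ n = z ^ m := by
        intro g
        obtain ⟨p, rfl⟩ := hpow g
        exact ⟨1, p, one_pos, by rw [zpow_one]⟩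
      exact LeftOrderAux.final hz hcomm hcom
    · -- dense case
      push_neg at hmin
      have hdense : ∀ c, lam.lt 1 c → ∃ y, lam.lt 1 y ∧ lam.lt y c := by
        intro c hc
        obtain ⟨y, hy1, hy2⟩ := hmin c hc
        exact ⟨y, hy1, LeftOrderAux.lt_of_not_le hy2⟩
      have hcomm := LeftOrderAux.dense_comm RI hconv hdense
      obtain ⟨A, hA⟩ : ∃ A : G, lam.lt 1 A := by
        rcases LeftOrderAux.trichotomy (lam := lam) 1 g₀ with h | h | h
        · exact ⟨g₀, h⟩
        · exact absurd h.symm hg₀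
        · exact ⟨g₀⁻¹, LeftOrderAux.lt_one_iff_inv.mp h⟩
      have hcom : ∀ g : G, ∃ n m : ℤ, 0 < n ∧ g ^ n = A ^ m := by
        intro g
        rcases LeftOrderAux.trichotomy (lam := lam) 1 g with hg | hg | hg
        · obtain ⟨m, n, hn, he⟩ :=
            LeftOrderAux.commensurable hF star RI hconv hA hcomm hne hg
          exact ⟨n, m, hn, he⟩
        · exact ⟨1, 0, one_pos, by rw [← hg]; simp⟩
        · obtain ⟨m, n, hn, he⟩ :=
            LeftOrderAux.commensurable hF star RI hconv hA hcomm hne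
              (LeftOrderAux.lt_one_iff_inv.mp hg)
          refine ⟨n, -m, hn, ?_⟩
          rw [inv_zpow] at he
          rw [zpow_neg, ← he, inv_inv]
      exact LeftOrderAux.final hA hcomm hcom
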